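/- Let j ≥ 2, let κ₂ satisfy |κ₂(α,β)| ≤ C_κ/(1+d(α,β)^s) with s > 2, and let κ_j satisfy |κ_j(α₁,...,α_j)| ≤ C(j)·∏_{e∈T} |κ₂(e)| for some spanning tree T on the complete graph with vertices α₁,...,α_j. Then there is a constant C' depending on j, s, C_κ, C(j) such that ∑_{a1,...,a_{2j}=1}^N |κ_j((a1,a2),...,(a_{2j-1},a_{2j}))| ≤ C'·N². -/

import Mathlib

open Finset MeasureTheory

/-- The metric on index pairs: d((a1,a2),(a3,a4)) = min(|a1-a3|+|a2-a4|, |a1-a4|+|a2-a3|). -/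
noncomputable def dIdx {N : ℕ} (a b : Fin N × Fin N) : ℝ :=
  min (|((a.1:ℕ):ℝ) - ((b.1:ℕ):ℝ)| + |((a.2:ℕ):ℝ) - ((b.2:ℕ):ℝ)|)
      (|((a.1:ℕ):ℝ) - ((b.2:ℕ):ℝ)| + |((a.2:ℕ):ℝ) - ((b.1:ℕ):ℝ)|)

/-- Euclidean norm of a vector in ℝ^N. -/
noncomputable def eucNorm {N : ℕ} (x : Fin N → ℝ) : ℝ := Real.sqrt (∑ i, x i ^ 2)

section Aux

lemma aux_summable_f (s' : ℝ) (hs' : 1 < s') :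
    Summable (fun n : ℕ => (1 + (n:ℝ) ^ s')⁻¹) := by
  rw [← summable_nat_add_iff 1]
  have h0 : Summable (fun n : ℕ => (((n:ℝ)+1) ^ s')⁻¹) := by
    have := (Real.summable_one_div_nat_rpow (p := s')).mpr hs'
    have h2 := this.comp_injective (Nat.succ_injective)
    exact h2.congr (fun n => by simp [Function.comp, Nat.succ_eq_add_one])
  apply Summable.of_nonneg_of_le (fun n => by positivity) _ h0
  intro n
  apply inv_anti₀ (by positivity)
  have : (0:ℝ) ≤ ((n:ℝ)+1) ^ s' := Real.rpow_nonneg (by positivity) _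
  push_cast
  linarith

lemma aux_single_sum (s' : ℝ) (T : ℝ)
    (hT : T = ∑' n : ℕ, (1 + (n:ℝ) ^ s')⁻¹)
    (hsumm : Summable (fun n : ℕ => (1 + (n:ℝ) ^ s')⁻¹))
    (N : ℕ) (b : Fin N) :
    ∑ a : Fin N, (1 + |((a:ℕ):ℝ) - ((b:ℕ):ℝ)| ^ s')⁻¹ ≤ 2 * T := by
  set f : ℕ → ℝ := fun n => (1 + (n:ℝ) ^ s')⁻¹ with hf
  have hfnn : ∀ n, 0 ≤ f n := fun n => by
    have : (0:ℝ) ≤ (n:ℝ) ^ s' := Real.rpow_nonneg (by positivity) _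
    positivity
  set m : Fin N → ℕ := fun a => if (a:ℕ) ≤ (b:ℕ) then (b:ℕ) - (a:ℕ) else (a:ℕ) - (b:ℕ) with hm
  have key : ∀ a : Fin N, (1 + |((a:ℕ):ℝ) - ((b:ℕ):ℝ)| ^ s')⁻¹ = f (m a) := by
    intro a
    have : |((a:ℕ):ℝ) - ((b:ℕ):ℝ)| = ((m a : ℕ) : ℝ) := by
      simp only [hm]
      split_ifs with h
      · rw [abs_of_nonpos (by linarith [(Nat.cast_le (α := ℝ)).mpr h])]
        push_cast [Nat.cast_sub h]
        ring
      · rw [abs_of_nonneg]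
        · push_cast [Nat.cast_sub (le_of_not_ge h)]
          ring
        · have := (Nat.cast_le (α := ℝ)).mpr (le_of_not_ge h)
          linarith
    rw [this]
  calc ∑ a : Fin N, (1 + |((a:ℕ):ℝ) - ((b:ℕ):ℝ)| ^ s')⁻¹
      = ∑ a : Fin N, f (m a) := by
        exact Finset.sum_congr rfl (fun a _ => key a)
    _ ≤ 2 * T := by
        rw [← Finset.sum_filter_add_sum_filter_not Finset.univ (fun a : Fin N => (a:ℕ) ≤ (b:ℕ))]
        have hp : ∀ (P : Finset (Fin N)), Set.InjOn m P → ∑ a ∈ P, f (m a) ≤ T := by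
          intro P hinj
          rw [← Finset.sum_image (fun x hx y hy hxy => hinj hx hy hxy)]
          rw [hT]
          exact Summable.sum_le_tsum _ (fun n _ => hfnn n) hsumm
        have h1 : Set.InjOn m (Finset.univ.filter (fun a : Fin N => (a:ℕ) ≤ (b:ℕ))) := by
          intro x hx y hy hxy
          simp only [Finset.coe_filter, Set.mem_setOf_eq, Finset.mem_univ, true_and] at hx hy
          simp only [hm] at hxy
          rw [if_pos hx, if_pos hy] at hxy
          have : (x:ℕ) = (y:ℕ) := by omega
          exact Fin.ext this
        have h2 : Set.InjOn m (Finset.univ.filter (fun a : Fin N => ¬ (a:ℕ) ≤ (b:ℕ))) := by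
          intro x hx y hy hxy
          simp only [Finset.coe_filter, Set.mem_setOf_eq, Finset.mem_univ, true_and] at hx hy
          simp only [hm] at hxy
          rw [if_neg hx, if_neg hy] at hxy
          have : (x:ℕ) = (y:ℕ) := by omega
          exact Fin.ext this
        linarith [hp _ h1, hp _ h2]

lemma aux_decouple (s : ℝ) (hs : 2 < s) (u v : ℝ) (hu : 0 ≤ u) (hv : 0 ≤ v) :
    (1 + (u + v) ^ s)⁻¹ ≤ 3 * ((1 + u ^ (s/2))⁻¹ * (1 + v ^ (s/2))⁻¹) := by
  have hs0 : (0:ℝ) ≤ s := by linarith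
  have hs2 : (0:ℝ) ≤ s/2 := by linarith
  have hA' : (0:ℝ) ≤ (u+v) ^ s := Real.rpow_nonneg (by linarith) _
  have hu2 : (0:ℝ) ≤ u ^ (s/2) := Real.rpow_nonneg hu _
  have hv2 : (0:ℝ) ≤ v ^ (s/2) := Real.rpow_nonneg hv _
  have hbd : ∀ w z : ℝ, 0 ≤ w → 0 ≤ z → w ^ (s/2) ≤ 1 + (w + z) ^ s := by
    intro w z hw hz
    have hwz : (0:ℝ) ≤ (w+z) ^ s := Real.rpow_nonneg (by linarith) _
    rcases le_total w 1 with h1 | h1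
    · have := Real.rpow_le_one hw h1 hs2
      linarith
    · have h2 : w ^ (s/2) ≤ w ^ s := Real.rpow_le_rpow_of_exponent_le h1 (by linarith)
      have h3 : w ^ s ≤ (w + z) ^ s := Real.rpow_le_rpow hw (by linarith) hs0
      linarith
  have hprod : u ^ (s/2) * v ^ (s/2) ≤ (u+v) ^ s := by
    rw [← Real.mul_rpow hu hv]
    have h1 : u * v ≤ (u+v)^(2:ℕ) := by nlinarith
    have h2 : (u*v) ^ (s/2) ≤ ((u+v)^(2:ℕ)) ^ (s/2) :=
      Real.rpow_le_rpow (by positivity) h1 hs2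
    calc (u*v) ^ (s/2) ≤ ((u+v)^(2:ℕ)) ^ (s/2) := h2
      _ = (u+v) ^ s := by
          rw [← Real.rpow_natCast (u+v) 2, ← Real.rpow_mul (by linarith)]
          norm_num
          congr 1
          ring
  have hB : (1 + u ^ (s/2)) * (1 + v ^ (s/2)) ≤ 3 * (1 + (u+v)^s) := by
    have h1 := hbd u v hu hv
    have h2 := hbd v u hv hu
    rw [add_comm v u] at h2
    nlinarith
  have hApos : (0:ℝ) < 1 + (u+v)^s := by linarith
  have hBpos : (0:ℝ) < (1 + u ^ (s/2)) * (1 + v ^ (s/2)) := by positivity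
  rw [← mul_inv, ← one_div ((1 + u ^ (s/2)) * (1 + v ^ (s/2))), mul_one_div, ← one_div (1 + (u+v)^s)]
  rw [div_le_div_iff₀ hApos hBpos]
  nlinarith

lemma aux_pair_sum (s Cκ T : ℝ) (hs : 2 < s) (hCκ : 0 < Cκ) (hT0 : 0 ≤ T)
    (hsingle : ∀ (N : ℕ) (b : Fin N),
      ∑ a : Fin N, (1 + |((a:ℕ):ℝ) - ((b:ℕ):ℝ)| ^ (s/2))⁻¹ ≤ 2 * T)
    (N : ℕ) (b : Fin N × Fin N) :
    ∑ a : Fin N × Fin N, Cκ / (1 + dIdx a b ^ s) ≤ 24 * Cκ * T ^ 2 := by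
  set h : Fin N → Fin N → ℝ := fun x y => (1 + |((x:ℕ):ℝ) - ((y:ℕ):ℝ)| ^ (s/2))⁻¹ with hh
  have hhnn : ∀ x y, 0 ≤ h x y := by
    intro x y
    have : (0:ℝ) ≤ |((x:ℕ):ℝ) - ((y:ℕ):ℝ)| ^ (s/2) := Real.rpow_nonneg (abs_nonneg _) _
    positivity
  have hpoint : ∀ a : Fin N × Fin N, Cκ / (1 + dIdx a b ^ s)
      ≤ 3 * Cκ * (h a.1 b.1 * h a.2 b.2) + 3 * Cκ * (h a.1 b.2 * h a.2 b.1) := by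
    intro a
    have key : ∀ x y z w : Fin N,
        Cκ * (1 + (|((x:ℕ):ℝ) - ((y:ℕ):ℝ)| + |((z:ℕ):ℝ) - ((w:ℕ):ℝ)|) ^ s)⁻¹
          ≤ 3 * Cκ * (h x y * h z w) := by
      intro x y z w
      have := aux_decouple s hs _ _ (abs_nonneg (((x:ℕ):ℝ) - ((y:ℕ):ℝ))) (abs_nonneg (((z:ℕ):ℝ) - ((w:ℕ):ℝ)))
      calc Cκ * (1 + (|((x:ℕ):ℝ) - ((y:ℕ):ℝ)| + |((z:ℕ):ℝ) - ((w:ℕ):ℝ)|) ^ s)⁻¹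
          ≤ Cκ * (3 * ((1 + |((x:ℕ):ℝ) - ((y:ℕ):ℝ)| ^ (s/2))⁻¹ * (1 + |((z:ℕ):ℝ) - ((w:ℕ):ℝ)| ^ (s/2))⁻¹)) :=
            mul_le_mul_of_nonneg_left this (le_of_lt hCκ)
        _ = 3 * Cκ * (h x y * h z w) := by rw [hh]; ring
    have hnn : ∀ x y z w : Fin N,
        (0:ℝ) ≤ Cκ * (1 + (|((x:ℕ):ℝ) - ((y:ℕ):ℝ)| + |((z:ℕ):ℝ) - ((w:ℕ):ℝ)|) ^ s)⁻¹ := by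
      intro x y z w
      have h1 : (0:ℝ) ≤ (|((x:ℕ):ℝ) - ((y:ℕ):ℝ)| + |((z:ℕ):ℝ) - ((w:ℕ):ℝ)|) ^ s :=
        Real.rpow_nonneg (by positivity) _
      positivity
    rw [div_eq_mul_inv]
    rcases min_cases (|((a.1:ℕ):ℝ) - ((b.1:ℕ):ℝ)| + |((a.2:ℕ):ℝ) - ((b.2:ℕ):ℝ)|)
      (|((a.1:ℕ):ℝ) - ((b.2:ℕ):ℝ)| + |((a.2:ℕ):ℝ) - ((b.1:ℕ):ℝ)|) with hmin | hmin
    · have heq : dIdx a b = |((a.1:ℕ):ℝ) - ((b.1:ℕ):ℝ)| + |((a.2:ℕ):ℝ) - ((b.2:ℕ):ℝ)| := hmin.1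
      rw [heq]
      have h1 := key a.1 b.1 a.2 b.2
      have h2 : (0:ℝ) ≤ 3 * Cκ * (h a.1 b.2 * h a.2 b.1) := by
        have := hhnn a.1 b.2; have := hhnn a.2 b.1; positivity
      linarith
    · have heq : dIdx a b = |((a.1:ℕ):ℝ) - ((b.2:ℕ):ℝ)| + |((a.2:ℕ):ℝ) - ((b.1:ℕ):ℝ)| := hmin.1
      rw [heq]
      have h1 := key a.1 b.2 a.2 b.1
      have h2 : (0:ℝ) ≤ 3 * Cκ * (h a.1 b.1 * h a.2 b.2) := by
        have := hhnn a.1 b.1; have := hhnn a.2 b.2; positivity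
      linarith
  calc ∑ a : Fin N × Fin N, Cκ / (1 + dIdx a b ^ s)
      ≤ ∑ a : Fin N × Fin N, (3 * Cκ * (h a.1 b.1 * h a.2 b.2) + 3 * Cκ * (h a.1 b.2 * h a.2 b.1)) :=
        Finset.sum_le_sum (fun a _ => hpoint a)
    _ = 3 * Cκ * ((∑ x : Fin N, h x b.1) * (∑ y : Fin N, h y b.2))
        + 3 * Cκ * ((∑ x : Fin N, h x b.2) * (∑ y : Fin N, h y b.1)) := by
        rw [Finset.sum_add_distrib]
        congr 1
        · rw [← Finset.mul_sum, Fintype.sum_prod_type, Finset.sum_mul_sum]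
        · rw [← Finset.mul_sum, Fintype.sum_prod_type, Finset.sum_mul_sum]
    _ ≤ 3 * Cκ * ((2*T) * (2*T)) + 3 * Cκ * ((2*T) * (2*T)) := by
        have e1 : ∑ x : Fin N, h x b.1 ≤ 2*T := hsingle N b.1
        have e2 : ∑ x : Fin N, h x b.2 ≤ 2*T := hsingle N b.2
        have hnn1 : (0:ℝ) ≤ ∑ x : Fin N, h x b.1 := Finset.sum_nonneg (fun x _ => hhnn x b.1)
        have hnn2 : (0:ℝ) ≤ ∑ x : Fin N, h x b.2 := Finset.sum_nonneg (fun x _ => hhnn x b.2)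
        gcongr
    _ = 24 * Cκ * T ^ 2 := by ring

lemma aux_sum_update_eq {I X : Type*} [Fintype I] [Fintype X] [DecidableEq I]
    (i₀ : I) (F : (I → X) → ℝ) :
    ∑ α : I → X, ∑ x : X, F (Function.update α i₀ x)
      = (Fintype.card X : ℝ) * ∑ α : I → X, F α := by
  have hφ : Function.Bijective (fun y : (I → X) × X =>
      ((Function.update y.1 i₀ y.2, y.1 i₀) : (I → X) × X)) := by
    apply Function.Involutive.bijective
    intro y
    simp only [Function.update_idem]
    ext1
    · simp [Function.update_eq_self]
    · simp
  calc ∑ α : I → X, ∑ x : X, F (Function.update α i₀ x)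
      = ∑ y : (I → X) × X, F (Function.update y.1 i₀ y.2) := by
        rw [Fintype.sum_prod_type]
    _ = ∑ y : (I → X) × X, F y.1 := by
        rw [← Fintype.sum_bijective _ hφ _ (fun y => F y.1) (fun y => rfl)]
    _ = (Fintype.card X : ℝ) * ∑ α : I → X, F α := by
        rw [Fintype.sum_prod_type]
        simp only [Finset.sum_const, Finset.card_univ, nsmul_eq_mul]
        rw [Finset.mul_sum]

lemma aux_exists_leaf {j : ℕ} (p : Fin j → Fin j) (r : Fin j)
    (hreach : ∀ i, ∃ n : ℕ, p^[n] i = r)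
    (E : Finset (Fin j)) (hrE : r ∉ E) (hne : E.Nonempty) :
    ∃ i₀ ∈ E, p i₀ ≠ i₀ ∧ ∀ i ∈ E, p i ≠ i₀ := by
  classical
  set d : Fin j → ℕ := fun i => Nat.find (hreach i) with hd
  have hdlt : ∀ i, i ≠ r → d (p i) < d i := by
    intro i hir
    have h1 : p^[d i] i = r := Nat.find_spec (hreach i)
    have h2 : d i ≠ 0 := by
      intro h0
      rw [h0] at h1
      exact hir h1
    have h3 : p^[d i - 1] (p i) = r := by
      have : p^[(d i - 1) + 1] i = r := by
        rwa [Nat.sub_add_cancel (Nat.one_le_iff_ne_zero.mpr h2)]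
      rwa [Function.iterate_succ_apply] at this
    have h4 : d (p i) ≤ d i - 1 := Nat.find_le h3
    omega
  obtain ⟨i₀, hi₀E, hmax⟩ := Finset.exists_max_image E d hne
  refine ⟨i₀, hi₀E, ?_, ?_⟩
  · intro hcontra
    have hir : i₀ ≠ r := fun h => hrE (h ▸ hi₀E)
    have := hdlt i₀ hir
    rw [hcontra] at this
    omega
  · intro i hiE hcontra
    have hir : i ≠ r := fun h => hrE (h ▸ hiE)
    have h1 := hdlt i hir
    rw [hcontra] at h1
    have := hmax i hiE
    omega

lemma aux_tree_sum {X : Type*} [Fintype X] [DecidableEq X] (hcX : 0 < Fintype.card X)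
    (w : X → X → ℝ) (hw : ∀ a b, 0 ≤ w a b) (S : ℝ) (hS0 : 0 ≤ S)
    (hS : ∀ b, ∑ a : X, w a b ≤ S)
    (j : ℕ) (p : Fin j → Fin j) (r : Fin j)
    (hreach : ∀ i, ∃ n : ℕ, p^[n] i = r) :
    ∀ (n : ℕ) (E : Finset (Fin j)), E.card = n → r ∉ E →
    ∑ α : Fin j → X, ∏ i ∈ E, w (α i) (α (p i))
      ≤ S ^ n * (Fintype.card X : ℝ) ^ (j - n) := by
  intro n
  induction n with
  | zero =>
    intro E hcard _
    rw [Finset.card_eq_zero] at hcard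
    subst hcard
    simp only [Finset.prod_empty, Finset.sum_const, Finset.card_univ, nsmul_eq_mul, mul_one,
      pow_zero, one_mul, Nat.sub_zero, Fintype.card_fun, Fintype.card_fin]
    push_cast
    exact le_refl _
  | succ n IH =>
    intro E hcard hrE
    have hne : E.Nonempty := Finset.card_pos.mp (by omega)
    obtain ⟨i₀, hi₀E, hpi₀, hleaf⟩ := aux_exists_leaf p r hreach E hrE hne
    set E' := E.erase i₀ with hE'
    have hcard' : E'.card = n := by rw [hE', Finset.card_erase_of_mem hi₀E, hcard]; omega
    have hrE' : r ∉ E' := fun h => hrE (Finset.mem_of_mem_erase h)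
    have hle : n + 1 ≤ j := by
      calc n + 1 = E.card := hcard.symm
        _ ≤ Fintype.card (Fin j) := Finset.card_le_univ E
        _ = j := Fintype.card_fin j
    have key : ∀ (α : Fin j → X) (x : X),
        ∏ i ∈ E, w (Function.update α i₀ x i) (Function.update α i₀ x (p i))
          = w x (α (p i₀)) * ∏ i ∈ E', w (α i) (α (p i)) := by
      intro α x
      rw [← Finset.mul_prod_erase E _ hi₀E]
      congr 1
      · rw [Function.update_self, Function.update_of_ne hpi₀]
      · apply Finset.prod_congr rfl
        intro i hi
        have hi1 : i ≠ i₀ := Finset.ne_of_mem_erase hi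
        have hi2 : p i ≠ i₀ := hleaf i (Finset.mem_of_mem_erase hi)
        rw [Function.update_of_ne hi1, Function.update_of_ne hi2]
    have main : (Fintype.card X : ℝ) * ∑ α : Fin j → X, ∏ i ∈ E, w (α i) (α (p i))
        ≤ S * ∑ α : Fin j → X, ∏ i ∈ E', w (α i) (α (p i)) := by
      rw [← aux_sum_update_eq i₀ (fun α => ∏ i ∈ E, w (α i) (α (p i)))]
      calc ∑ α : Fin j → X, ∑ x : X, ∏ i ∈ E, w (Function.update α i₀ x i) (Function.update α i₀ x (p i))
          = ∑ α : Fin j → X, (∑ x : X, w x (α (p i₀))) * ∏ i ∈ E', w (α i) (α (p i)) := by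
            apply Finset.sum_congr rfl
            intro α _
            rw [Finset.sum_mul]
            exact Finset.sum_congr rfl (fun x _ => key α x)
        _ ≤ ∑ α : Fin j → X, S * ∏ i ∈ E', w (α i) (α (p i)) := by
            apply Finset.sum_le_sum
            intro α _
            apply mul_le_mul_of_nonneg_right (hS (α (p i₀)))
            exact Finset.prod_nonneg (fun i _ => hw _ _)
        _ = S * ∑ α : Fin j → X, ∏ i ∈ E', w (α i) (α (p i)) := by
            rw [Finset.mul_sum]
    have IH' := IH E' hcard' hrE'
    have hcXR : (0:ℝ) < (Fintype.card X : ℝ) := by exact_mod_cast hcX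
    have hstep : ∑ α : Fin j → X, ∏ i ∈ E, w (α i) (α (p i))
        ≤ S * (S ^ n * (Fintype.card X : ℝ) ^ (j - n)) / (Fintype.card X : ℝ) := by
      rw [le_div_iff₀ hcXR]
      calc (∑ α : Fin j → X, ∏ i ∈ E, w (α i) (α (p i))) * (Fintype.card X : ℝ)
          = (Fintype.card X : ℝ) * ∑ α : Fin j → X, ∏ i ∈ E, w (α i) (α (p i)) := by ring
        _ ≤ S * ∑ α : Fin j → X, ∏ i ∈ E', w (α i) (α (p i)) := main
        _ ≤ S * (S ^ n * (Fintype.card X : ℝ) ^ (j - n)) :=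
            mul_le_mul_of_nonneg_left IH' hS0
    calc ∑ α : Fin j → X, ∏ i ∈ E, w (α i) (α (p i))
        ≤ S * (S ^ n * (Fintype.card X : ℝ) ^ (j - n)) / (Fintype.card X : ℝ) := hstep
      _ = S ^ (n+1) * (Fintype.card X : ℝ) ^ (j - (n+1)) := by
          have hj : j - n = (j - (n+1)) + 1 := by omega
          rw [hj, pow_succ]
          field_simp
          ring

end Aux

set_option maxHeartbeats 1000000 in
/-- A rooted spanning tree on `Fin j` is encoded by a parent map `p` with root `r`:
`p r = r` and every vertex reaches the root by iterating `p`. Its edges are the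
pairs `(i, p i)` for `i ≠ r`. -/
theorem higher_cumulant_sum_bound (j : ℕ) (hj : 2 ≤ j) (s Cκ Cj : ℝ)
    (hs : 2 < s) (hCκ : 0 < Cκ) (hCj : 0 < Cj) :
    ∃ C' : ℝ, 0 < C' ∧ ∀ (N : ℕ) (κj : (Fin j → Fin N × Fin N) → ℝ),
      (∀ α : Fin j → Fin N × Fin N, ∃ (p : Fin j → Fin j) (r : Fin j),
        p r = r ∧ (∀ i : Fin j, ∃ n : ℕ, p^[n] i = r) ∧
        |κj α| ≤ Cj * ∏ i ∈ Finset.univ.erase r, Cκ / (1 + dIdx (α i) (α (p i)) ^ s)) →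
      ∑ α : Fin j → Fin N × Fin N, |κj α| ≤ C' * (N : ℝ) ^ 2 := by
  classical
  have hs' : 1 < s / 2 := by linarith
  have hsumm := aux_summable_f (s/2) hs'
  set T : ℝ := ∑' n : ℕ, (1 + (n:ℝ) ^ (s/2))⁻¹ with hTdef
  have hT0 : 0 ≤ T := tsum_nonneg (fun n => by
    have : (0:ℝ) ≤ (n:ℝ) ^ (s/2) := Real.rpow_nonneg (by positivity) _
    positivity)
  set S : ℝ := 24 * Cκ * T ^ 2 + 1 with hSdef
  have hS0 : (0:ℝ) < S := by positivity
  have hSbound : ∀ (N : ℕ) (b : Fin N × Fin N),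
      ∑ a : Fin N × Fin N, Cκ / (1 + dIdx a b ^ s) ≤ S := by
    intro N b
    have := aux_pair_sum s Cκ T hs hCκ hT0
      (fun N b => aux_single_sum (s/2) T hTdef hsumm N b) N b
    linarith
  have hjpos : 0 < j := by omega
  have hne : Nonempty (Fin j) := ⟨⟨0, hjpos⟩⟩
  set M : ℕ := Fintype.card ((Fin j → Fin j) × Fin j) with hMdef
  have hMpos : 0 < M := Fintype.card_pos
  refine ⟨(M:ℝ) * Cj * S ^ (j-1), by positivity, ?_⟩
  intro N κj hκ
  rcases Nat.eq_zero_or_pos N with hN | hN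
  · subst hN
    have : IsEmpty (Fin j → Fin 0 × Fin 0) := by
      have : IsEmpty (Fin 0 × Fin 0) := by infer_instance
      infer_instance
    rw [Finset.univ_eq_empty, Finset.sum_empty]
    positivity
  · have hcX : 0 < Fintype.card (Fin N × Fin N) := by
      simp only [Fintype.card_prod, Fintype.card_fin]
      positivity
    have hcXval : (Fintype.card (Fin N × Fin N) : ℝ) = (N:ℝ) ^ 2 := by
      simp only [Fintype.card_prod, Fintype.card_fin]
      push_cast
      ring
    have hw : ∀ a b : Fin N × Fin N, 0 ≤ Cκ / (1 + dIdx a b ^ s) := by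
      intro a b
      have hd : 0 ≤ dIdx a b := le_min (by positivity) (by positivity)
      have h1 : (0:ℝ) ≤ dIdx a b ^ s := Real.rpow_nonneg hd _
      have h2 : (0:ℝ) < 1 + dIdx a b ^ s := by linarith
      positivity
    set Trees : Finset ((Fin j → Fin j) × Fin j) :=
      Finset.univ.filter (fun pr => pr.1 pr.2 = pr.2 ∧ ∀ i, ∃ n : ℕ, pr.1^[n] i = pr.2)
      with hTrees
    have hterm_nn : ∀ (pr : (Fin j → Fin j) × Fin j) (α : Fin j → Fin N × Fin N),
        0 ≤ Cj * ∏ i ∈ Finset.univ.erase pr.2, Cκ / (1 + dIdx (α i) (α (pr.1 i)) ^ s) := by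
      intro pr α
      exact mul_nonneg (le_of_lt hCj) (Finset.prod_nonneg (fun i _ => hw _ _))
    have stepA : ∀ α : Fin j → Fin N × Fin N, |κj α| ≤
        ∑ pr ∈ Trees, Cj * ∏ i ∈ Finset.univ.erase pr.2, Cκ / (1 + dIdx (α i) (α (pr.1 i)) ^ s) := by
      intro α
      obtain ⟨p, r, hpr, hreach, hle⟩ := hκ α
      have hmem : (p, r) ∈ Trees := by
        rw [hTrees, Finset.mem_filter]
        exact ⟨Finset.mem_univ _, hpr, hreach⟩
      have h2 := Finset.single_le_sum
        (f := fun pr : (Fin j → Fin j) × Fin j =>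
          Cj * ∏ i ∈ Finset.univ.erase pr.2, Cκ / (1 + dIdx (α i) (α (pr.1 i)) ^ s))
        (fun pr _ => hterm_nn pr α) hmem
      simp only at h2
      exact le_trans hle h2
    have stepC : ∀ pr ∈ Trees,
        ∑ α : Fin j → Fin N × Fin N, ∏ i ∈ Finset.univ.erase pr.2, Cκ / (1 + dIdx (α i) (α (pr.1 i)) ^ s)
          ≤ S ^ (j-1) * (N:ℝ) ^ 2 := by
      intro pr hpr
      rw [hTrees, Finset.mem_filter] at hpr
      obtain ⟨-, hfix, hreach⟩ := hpr
      have hcard : (Finset.univ.erase pr.2).card = j - 1 := by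
        rw [Finset.card_erase_of_mem (Finset.mem_univ _), Finset.card_univ, Fintype.card_fin]
      have := aux_tree_sum hcX (fun a b => Cκ / (1 + dIdx a b ^ s)) hw S (le_of_lt hS0)
        (hSbound N) j pr.1 pr.2 hreach
        (j-1) (Finset.univ.erase pr.2) hcard (Finset.notMem_erase _ _)
      have hexp : j - (j - 1) = 1 := by omega
      rw [hexp, pow_one, hcXval] at this
      exact this
    calc ∑ α : Fin j → Fin N × Fin N, |κj α|
        ≤ ∑ α : Fin j → Fin N × Fin N, ∑ pr ∈ Trees, Cj * ∏ i ∈ Finset.univ.erase pr.2, Cκ / (1 + dIdx (α i) (α (pr.1 i)) ^ s) :=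
          Finset.sum_le_sum (fun α _ => stepA α)
      _ = ∑ pr ∈ Trees, Cj * ∑ α : Fin j → Fin N × Fin N, ∏ i ∈ Finset.univ.erase pr.2, Cκ / (1 + dIdx (α i) (α (pr.1 i)) ^ s) := by
          rw [Finset.sum_comm]
          exact Finset.sum_congr rfl (fun pr _ => by rw [Finset.mul_sum])
      _ ≤ ∑ pr ∈ Trees, Cj * (S ^ (j-1) * (N:ℝ) ^ 2) := by
          apply Finset.sum_le_sum
          intro pr hpr
          exact mul_le_mul_of_nonneg_left (stepC pr hpr) (le_of_lt hCj)
      _ = (Trees.card : ℝ) * (Cj * (S ^ (j-1) * (N:ℝ) ^ 2)) := by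
          rw [Finset.sum_const, nsmul_eq_mul]
      _ ≤ (M:ℝ) * (Cj * (S ^ (j-1) * (N:ℝ) ^ 2)) := by
          apply mul_le_mul_of_nonneg_right _ (by positivity)
          exact_mod_cast Finset.card_le_univ Trees
      _ = (M:ℝ) * Cj * S ^ (j-1) * (N:ℝ) ^ 2 := by ring
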